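/- arXiv:0707.2281 — 3 statements merged into one kernel-verified Lean document; each statement's English description precedes it below -/
import Mathlib

section
/- In a symplectic vector space M over a field K, for any two Lagrangians X there exists a Lagrangian opposite to X; moreover, the symplectic group Sp(M) acts transitively on ordered pairs (X,Y) of opposite Lagrangians. -/
/- STATEMENT 2: In a symplectic vector space M over a field K, for any Lagrangian X there
exists a Lagrangian opposite to X; moreover the symplectic group acts transitively on
ordered pairs of opposite Lagrangians. -/

namespace Stmt2

variable {K M : Type*} [Field K] [AddCommGroup M] [Module K M]

/-- A Lagrangian of the bilinear form ω: a subspace equal to its own orthogonal. -/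
def IsLagrangian (ω : LinearMap.BilinForm K M) (L : Submodule K M) : Prop :=
  ω.orthogonal L = L

open Module Submodule LinearMap.BilinForm

/-- Key induction: inside a subspace `W` on which `ω` is nondegenerate, a
"relative Lagrangian" `X` (i.e. `ω.orthogonal X ⊓ W = X`) has a relative Lagrangian
complement. -/
lemma key [FiniteDimensional K M] (ω : LinearMap.BilinForm K M) (halt : ω.IsAlt) :
    ∀ n : ℕ, ∀ W : Submodule K M, finrank K W = n → W ⊓ ω.orthogonal W = ⊥ →
    ∀ X : Submodule K M, X ≤ W → ω.orthogonal X ⊓ W = X →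
    ∃ Y : Submodule K M, Y ≤ W ∧ ω.orthogonal Y ⊓ W = Y ∧ X ⊓ Y = ⊥ := by
  intro n
  induction n using Nat.strong_induction_on with
  | _ n ih =>
    intro W hWn hWnd X hXW hXlag
    have hXselforth : ∀ u ∈ X, ∀ v ∈ X, ω u v = 0 := by
      intro u hu v hv
      have : v ∈ ω.orthogonal X := by
        rw [← hXlag] at hv; exact hv.1
      exact this u hu
    by_cases hX0 : X = ⊥
    · refine ⟨⊥, bot_le, ?_, by simp⟩
      subst hX0
      rw [orthogonal_bot] at hXlag ⊢
      simpa using hXlag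
    · -- pick x ∈ X nonzero and y ∈ W with ω x y = 1
      obtain ⟨x, hxX, hx0⟩ := (Submodule.ne_bot_iff X).mp hX0
      have hxW : x ∈ W := hXW hxX
      have hxnW : x ∉ ω.orthogonal W := by
        intro h
        exact hx0 (by simpa using (le_of_eq hWnd) (Submodule.mem_inf.mpr ⟨hxW, h⟩))
      obtain ⟨w, hwW, hwx⟩ : ∃ w ∈ W, ω w x ≠ 0 := by
        by_contra h
        push_neg at h
        exact hxnW (fun m hm => h m hm)
      have hxw : ω x w ≠ 0 := by
        rw [← LinearMap.IsAlt.neg halt w x]; simpa using hwx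
      set y : M := (ω x w)⁻¹ • w with hy_def
      have hyW : y ∈ W := Submodule.smul_mem _ _ hwW
      have hxy : ω x y = 1 := by
        simp [hy_def, inv_mul_cancel₀ hxw, mul_comm]
      have hyx : ω y x = -1 := by
        rw [← LinearMap.IsAlt.neg halt x y, hxy]
      have hxx : ω x x = 0 := halt x
      have hyy : ω y y = 0 := halt y
      set P : Submodule K M := Submodule.span K {x, y} with hP_def
      have hxP : x ∈ P := Submodule.subset_span (by simp)
      have hyP : y ∈ P := Submodule.subset_span (by simp)
      have hPW : P ≤ W := by
        rw [hP_def, Submodule.span_le]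
        rintro z (rfl | rfl) <;> assumption
      -- membership in the orthogonal of P
      have hmemP : ∀ z : M, ω x z = 0 → ω y z = 0 → z ∈ ω.orthogonal P := by
        intro z h1 h2
        rw [mem_orthogonal_iff]
        intro p hp
        obtain ⟨a, b, rfl⟩ := Submodule.mem_span_pair.mp hp
        show ω (a • x + b • y) z = 0
        simp [h1, h2]
      have horthP : ∀ z ∈ ω.orthogonal P, ω x z = 0 ∧ ω y z = 0 :=
        fun z hz => ⟨hz x hxP, hz y hyP⟩
      set W' : Submodule K M := ω.orthogonal P ⊓ W with hW'_def
      have hW'W : W' ≤ W := inf_le_right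
      have hW'P : W' ≤ ω.orthogonal P := inf_le_left
      -- the projection to the orthogonal of P
      have hproj : ∀ z : M, z + (ω y z) • x - (ω x z) • y ∈ ω.orthogonal P := by
        intro z
        apply hmemP
        · simp [mul_comm, hxx, hxy]
        · simp [hyy, hyx]
      have hsup : P ⊔ W' = W := by
        apply le_antisymm (sup_le hPW hW'W)
        intro z hz
        have h1 : (ω x z) • y - (ω y z) • x ∈ P :=
          Submodule.sub_mem _ (Submodule.smul_mem _ _ hyP) (Submodule.smul_mem _ _ hxP)
        have h2 : z + (ω y z) • x - (ω x z) • y ∈ W' := by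
          refine Submodule.mem_inf.mpr ⟨hproj z, ?_⟩
          exact Submodule.sub_mem _ (Submodule.add_mem _ hz (Submodule.smul_mem _ _ hxW))
            (Submodule.smul_mem _ _ hyW)
        have : z = ((ω x z) • y - (ω y z) • x) + (z + (ω y z) • x - (ω x z) • y) := by abel
        rw [this]
        exact Submodule.add_mem _ (Submodule.mem_sup_left h1) (Submodule.mem_sup_right h2)
      have hdisj : P ⊓ W' = ⊥ := by
        rw [Submodule.eq_bot_iff]
        intro z hz
        obtain ⟨a, b, rfl⟩ := Submodule.mem_span_pair.mp hz.1
        obtain ⟨h1, h2⟩ := horthP _ (hz.2.1)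
        have hb : b = 0 := by simpa [hxx, hxy] using h1
        have ha : a = 0 := by
          have := h2
          simp [hyy, hyx] at this
          simpa using this
        simp [ha, hb]
      -- nondegeneracy on W'
      have hW'nd : W' ⊓ ω.orthogonal W' = ⊥ := by
        rw [Submodule.eq_bot_iff]
        intro z hz
        have hzW : z ∈ W ⊓ ω.orthogonal W := by
          refine Submodule.mem_inf.mpr ⟨hW'W hz.1, ?_⟩
          rw [mem_orthogonal_iff]
          intro m hm
          rw [← hsup] at hm
          obtain ⟨p, hp, u, hu, rfl⟩ := Submodule.mem_sup.mp hm
          show ω (p + u) z = 0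
          have h1 : ω p z = 0 := (hz.1).1 p hp
          have h2 : ω u z = 0 := hz.2 u hu
          simp [h1, h2]
        rw [hWnd] at hzW
        exact hzW
      -- the relative Lagrangian X₀ = X ⊓ W'
      set X₀ : Submodule K M := X ⊓ W' with hX₀_def
      have hX₀W' : X₀ ≤ W' := inf_le_right
      -- decomposition of elements of X
      have hXdec : ∀ u ∈ X, u + (ω y u) • x ∈ X₀ := by
        intro u hu
        refine Submodule.mem_inf.mpr ⟨Submodule.add_mem _ hu (Submodule.smul_mem _ _ hxX), ?_⟩
        refine Submodule.mem_inf.mpr ⟨?_, Submodule.add_mem _ (hXW hu)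
          (Submodule.smul_mem _ _ hxW)⟩
        apply hmemP
        · simp [hxx, hXselforth x hxX u hu]
        · simp [hyx]
      have hX₀lag : ω.orthogonal X₀ ⊓ W' = X₀ := by
        apply le_antisymm
        · intro z hz
          refine Submodule.mem_inf.mpr ⟨?_, hz.2⟩
          have hzX : z ∈ ω.orthogonal X := by
            rw [mem_orthogonal_iff]
            intro u hu
            have h1 : ω (u + (ω y u) • x) z = 0 := hz.1 _ (hXdec u hu)
            have h2 : ω x z = 0 := (horthP z (hz.2).1).1
            show ω u z = 0
            have := h1
            simp [h2] at this
            exact this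
          rw [← hXlag]
          exact Submodule.mem_inf.mpr ⟨hzX, hW'W hz.2⟩
        · intro z hz
          refine Submodule.mem_inf.mpr ⟨?_, hz.2⟩
          rw [mem_orthogonal_iff]
          intro u hu
          exact hXselforth u (Submodule.mem_inf.mp hu).1 z hz.1
      -- dimension drops
      have hPne : P ≠ ⊥ := by
        intro h
        rw [h] at hxP
        exact hx0 (by simpa using hxP)
      have hfinP : 0 < finrank K P := by
        rcases Nat.eq_zero_or_pos (finrank K P) with h | h
        · exact absurd (Submodule.finrank_eq_zero.mp h) hPne
        · exact h
      have hWfin : finrank K W = finrank K P + finrank K W' := by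
        have := Submodule.finrank_sup_add_finrank_inf_eq P W'
        rw [hsup, hdisj] at this
        simpa using this
      have hlt : finrank K W' < n := by
        rw [← hWn]; omega
      obtain ⟨Y₀, hY₀W', hY₀lag, hXY₀⟩ :=
        ih (finrank K W') hlt W' rfl hW'nd X₀ hX₀W' hX₀lag
      have hY₀orth : Y₀ ≤ ω.orthogonal Y₀ := by
        conv_lhs => rw [← hY₀lag]
        exact inf_le_left
      have hY₀P : Y₀ ≤ ω.orthogonal P := hY₀W'.trans hW'P
      -- the complement Y
      refine ⟨(K ∙ y) ⊔ Y₀, ?_, ?_, ?_⟩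
      · exact sup_le ((Submodule.span_singleton_le_iff_mem _ _).mpr hyW) (hY₀W'.trans hW'W)
      · apply le_antisymm
        · intro z hz
          obtain ⟨hz1, hz2⟩ := Submodule.mem_inf.mp hz
          have hyz : ω y z = 0 := hz1 y (Submodule.mem_sup_left (Submodule.mem_span_singleton_self y))
          have hz' : z - (ω x z) • y ∈ W' := by
            refine Submodule.mem_inf.mpr ⟨?_, Submodule.sub_mem _ hz2 (Submodule.smul_mem _ _ hyW)⟩
            have := hproj z
            rw [hyz] at this
            simpa using this
          have hz'Y₀ : z - (ω x z) • y ∈ Y₀ := by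
            rw [← hY₀lag]
            refine Submodule.mem_inf.mpr ⟨?_, hz'⟩
            rw [mem_orthogonal_iff]
            intro u hu
            have h1 : ω u z = 0 := hz1 u (Submodule.mem_sup_right hu)
            have h2 : ω u y = 0 := by
              rw [← LinearMap.IsAlt.neg halt y u, (horthP u (hY₀P hu)).2, neg_zero]
            show ω u (z - (ω x z) • y) = 0
            simp [h1, h2]
          have : z = (ω x z) • y + (z - (ω x z) • y) := by abel
          rw [this]
          exact Submodule.add_mem _
            (Submodule.mem_sup_left (Submodule.smul_mem _ _ (Submodule.mem_span_singleton_self y)))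
            (Submodule.mem_sup_right hz'Y₀)
        · intro z hz
          obtain ⟨u, hu, v, hv, rfl⟩ := Submodule.mem_sup.mp hz
          obtain ⟨a, rfl⟩ := Submodule.mem_span_singleton.mp hu
          refine Submodule.mem_inf.mpr ⟨?_, sup_le
            ((Submodule.span_singleton_le_iff_mem _ _).mpr hyW) (hY₀W'.trans hW'W) hz⟩
          rw [mem_orthogonal_iff]
          intro m hm
          obtain ⟨u', hu', v', hv', rfl⟩ := Submodule.mem_sup.mp hm
          obtain ⟨b, rfl⟩ := Submodule.mem_span_singleton.mp hu'
          show ω (b • y + v') (a • y + v) = 0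
          have h1 : ω y v = 0 := (horthP v (hY₀P hv)).2
          have h2 : ω v' y = 0 := by
            rw [← LinearMap.IsAlt.neg halt y v', (horthP v' (hY₀P hv')).2, neg_zero]
          have h3 : ω v' v = 0 := hY₀orth hv v' hv'
          simp [hyy, h1, h2, h3]
      · rw [Submodule.eq_bot_iff]
        intro z hz
        obtain ⟨hzX, hzY⟩ := Submodule.mem_inf.mp hz
        obtain ⟨u, hu, v, hv, rfl⟩ := Submodule.mem_sup.mp hzY
        obtain ⟨a, rfl⟩ := Submodule.mem_span_singleton.mp hu
        have hxz : ω x (a • y + v) = 0 := hXselforth x hxX _ hzX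
        have hxv : ω x v = 0 := (horthP v (hY₀P hv)).1
        have ha : a = 0 := by
          simp [hxy, hxv] at hxz
          exact hxz
        rw [ha, zero_smul, zero_add] at hzX hz ⊢
        have : v ∈ X₀ ⊓ Y₀ := Submodule.mem_inf.mpr
          ⟨Submodule.mem_inf.mpr ⟨hzX, hY₀W' hv⟩, hv⟩
        rw [hXY₀] at this
        exact this

/-- Any Lagrangian has the dimension half of that of the whole space. -/
lemma lagrangian_finrank [FiniteDimensional K M] (ω : LinearMap.BilinForm K M)
    (halt : ω.IsAlt) (hnd : ω.Nondegenerate) {X : Submodule K M}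
    (hX : IsLagrangian ω X) : finrank K X + finrank K X = finrank K M := by
  have := finrank_add_finrank_orthogonal (B := ω) halt.isRefl X
  rw [orthogonal_top_eq_bot hnd, inf_bot_eq, finrank_bot, add_zero,
    hX] at this
  exact this

theorem exists_opposite_and_transitivity
    [FiniteDimensional K M] (ω : LinearMap.BilinForm K M)
    (halt : ω.IsAlt) (hnd : ω.Nondegenerate) :
    (∀ X : Submodule K M, IsLagrangian ω X →
      ∃ Y : Submodule K M, IsLagrangian ω Y ∧ X ⊓ Y = ⊥) ∧
    (∀ X Y X' Y' : Submodule K M,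
      IsLagrangian ω X → IsLagrangian ω Y → X ⊓ Y = ⊥ →
      IsLagrangian ω X' → IsLagrangian ω Y' → X' ⊓ Y' = ⊥ →
      ∃ g : M ≃ₗ[K] M, (∀ u v : M, ω (g u) (g v) = ω u v) ∧
        X.map (g : M →ₗ[K] M) = X' ∧ Y.map (g : M →ₗ[K] M) = Y') := by
  constructor
  · -- existence of opposite Lagrangian
    intro X hX
    have h1 : ⊤ ⊓ ω.orthogonal ⊤ = ⊥ := by
      rw [orthogonal_top_eq_bot hnd, inf_bot_eq]
    have h2 : ω.orthogonal X ⊓ ⊤ = X := by rw [inf_top_eq]; exact hX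
    obtain ⟨Y, _, hYlag, hXY⟩ := key ω halt (finrank K (⊤ : Submodule K M)) ⊤ rfl h1 X le_top h2
    rw [inf_top_eq] at hYlag
    exact ⟨Y, hYlag, hXY⟩
  · -- transitivity
    intro X Y X' Y' hX hY hXY hX' hY' hXY'
    have hiso : ∀ Z : Submodule K M, IsLagrangian ω Z → ∀ u ∈ Z, ∀ v ∈ Z, ω u v = 0 := by
      intro Z hZ u hu v hv
      rw [← hZ] at hv
      exact hv u hu
    have hdX := lagrangian_finrank ω halt hnd hX
    have hdY := lagrangian_finrank ω halt hnd hY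
    have hdX' := lagrangian_finrank ω halt hnd hX'
    have hdY' := lagrangian_finrank ω halt hnd hY'
    have hcompl : ∀ A B : Submodule K M, finrank K A + finrank K A = finrank K M →
        finrank K B + finrank K B = finrank K M → A ⊓ B = ⊥ → IsCompl A B := by
      intro A B hA hB hAB
      refine ⟨disjoint_iff.mpr hAB, codisjoint_iff.mpr ?_⟩
      apply Submodule.eq_top_of_finrank_eq
      have h2 := Submodule.finrank_sup_add_finrank_inf_eq A B
      rw [hAB, finrank_bot, add_zero] at h2
      have h3 := Submodule.finrank_le (A ⊔ B)
      omega
    have hc : IsCompl X Y := hcompl X Y hdX hdY hXY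
    have hc' : IsCompl X' Y' := hcompl X' Y' hdX' hdY' hXY'
    -- the pairing between an opposite pair of Lagrangians
    have pairing : ∀ A B : Submodule K M, IsLagrangian ω A → IsLagrangian ω B →
        IsCompl A B → ∃ ρ : B ≃ₗ[K] Module.Dual K A, ∀ (a : A) (b : B),
          ρ b a = ω (a : M) (b : M) := by
      intro A B hA hB hAB
      set ρ₀ : B →ₗ[K] Module.Dual K A := (ω.compl₁₂ A.subtype B.subtype).flip with hρ₀
      have hinj : Function.Injective ρ₀ := by
        rw [← LinearMap.ker_eq_bot, Submodule.eq_bot_iff]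
        intro b hb
        have hb' : ∀ a : A, ω (a : M) (b : M) = 0 := by
          intro a
          have := LinearMap.congr_fun (LinearMap.mem_ker.mp hb) a
          simpa [hρ₀] using this
        have hbz : (b : M) = 0 := by
          apply hnd.1
          intro m
          have hm : m ∈ A ⊔ B := by rw [hAB.codisjoint.eq_top]; trivial
          obtain ⟨u, hu, v, hv, rfl⟩ := Submodule.mem_sup.mp hm
          have h1 : ω (b : M) u = 0 := by
            rw [← LinearMap.IsAlt.neg halt u b, hb' ⟨u, hu⟩, neg_zero]
          have h2 : ω (b : M) v = 0 := hiso B hB (b : M) b.2 v hv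
          simp [h1, h2]
        simpa using hbz
      have hfr : finrank K B = finrank K (Module.Dual K A) := by
        rw [Subspace.dual_finrank_eq]
        have h1 := lagrangian_finrank ω halt hnd hA
        have h2 := lagrangian_finrank ω halt hnd hB
        omega
      have hsurj : Function.Surjective ρ₀ :=
        (LinearMap.injective_iff_surjective_of_finrank_eq_finrank hfr).mp hinj
      exact ⟨LinearEquiv.ofBijective ρ₀ ⟨hinj, hsurj⟩, fun a b => rfl⟩
    obtain ⟨ρ, hρ⟩ := pairing X Y hX hY hc
    obtain ⟨ρ', hρ'⟩ := pairing X' Y' hX' hY' hc'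
    have hfr' : finrank K X = finrank K X' := by omega
    set f : X ≃ₗ[K] X' := LinearEquiv.ofFinrankEq _ _ hfr' with hf
    set h : Y ≃ₗ[K] Y' := (ρ.trans f.symm.dualMap).trans ρ'.symm with hh
    have hkey : ∀ (x : X) (y : Y), ω (f x : M) (h y : M) = ω (x : M) (y : M) := by
      intro x y
      have h1 : ρ' (h y) = f.symm.dualMap (ρ y) := by
        rw [hh]
        simp
      calc ω (f x : M) ((h y : Y') : M) = ρ' (h y) (f x) := (hρ' (f x) (h y)).symm
        _ = (ρ y) (f.symm (f x)) := by rw [h1, LinearEquiv.dualMap_apply]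
        _ = ρ y x := by rw [f.symm_apply_apply]
        _ = ω (x : M) (y : M) := hρ x y
    have hkey2 : ∀ (y : Y) (x : X), ω (h y : M) (f x : M) = ω (y : M) (x : M) := by
      intro y x
      rw [← LinearMap.IsAlt.neg halt (f x : M) (h y : M), hkey,
        LinearMap.IsAlt.neg halt (x : M) (y : M)]
    set e : (X × Y) ≃ₗ[K] M := Submodule.prodEquivOfIsCompl X Y hc with he
    set e' : (X' × Y') ≃ₗ[K] M := Submodule.prodEquivOfIsCompl X' Y' hc' with he'
    set g : M ≃ₗ[K] M := e.symm.trans ((f.prodCongr h).trans e') with hg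
    have hgu : ∀ u : M, g u = ↑(f (e.symm u).1) + ↑(h (e.symm u).2) := by
      intro u
      rw [hg]
      rfl
    have hu_dec : ∀ u : M, u = ↑(e.symm u).1 + ↑(e.symm u).2 := by
      intro u
      conv_lhs => rw [← e.apply_symm_apply u]
      rw [he]
      rfl
    have hgX : ∀ (u : M) (hu : u ∈ X), g u = ↑(f ⟨u, hu⟩) := by
      intro u hu
      rw [hgu]
      have : e.symm u = (⟨u, hu⟩, 0) := by
        rw [he]
        exact Submodule.prodEquivOfIsCompl_symm_apply_left X Y hc ⟨u, hu⟩
      rw [this]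
      simp
    have hgY : ∀ (u : M) (hu : u ∈ Y), g u = ↑(h ⟨u, hu⟩) := by
      intro u hu
      rw [hgu]
      have : e.symm u = (0, ⟨u, hu⟩) := by
        rw [he]
        exact Submodule.prodEquivOfIsCompl_symm_apply_right X Y hc ⟨u, hu⟩
      rw [this]
      simp
    refine ⟨g, ?_, ?_, ?_⟩
    · intro u v
      have h1 := hgu u
      have h2 := hgu v
      have h3 := hu_dec u
      have h4 := hu_dec v
      set x1 := (e.symm u).1
      set y1 := (e.symm u).2
      set x2 := (e.symm v).1
      set y2 := (e.symm v).2
      rw [h1, h2]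
      conv_rhs => rw [h3, h4]
      simp only [map_add, LinearMap.add_apply]
      rw [hiso X' hX' _ (f x1).2 _ (f x2).2, hiso Y' hY' _ (h y1).2 _ (h y2).2,
        hiso X hX _ x1.2 _ x2.2, hiso Y hY _ y1.2 _ y2.2, hkey x1 y2, hkey2 y1 x2]
    · apply le_antisymm
      · rintro _ ⟨u, hu, rfl⟩
        show g u ∈ X'
        rw [hgX u hu]
        exact (f ⟨u, hu⟩).2
      · intro x' hx'
        refine ⟨↑(f.symm ⟨x', hx'⟩), (f.symm ⟨x', hx'⟩).2, ?_⟩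
        show g _ = x'
        rw [hgX _ (f.symm ⟨x', hx'⟩).2]
        simp
    · apply le_antisymm
      · rintro _ ⟨u, hu, rfl⟩
        show g u ∈ Y'
        rw [hgY u hu]
        exact (h ⟨u, hu⟩).2
      · intro y' hy'
        refine ⟨↑(h.symm ⟨y', hy'⟩), (h.symm ⟨y', hy'⟩).2, ?_⟩
        show g _ = y'
        rw [hgY _ (h.symm ⟨y', hy'⟩).2]
        simp

end Stmt2
end

section
/- Let Γ be a graph with the star property: for every finite set of vertices x₀,…,x_k there is a vertex y distinct from and adjacent to all of them. Then the simplicial flag complex Fl(Γ) (whose k-simplices are (k+1)-tuples of pairwise equal-or-adjacent vertices) is acyclic: every k-cycle of the simplicial chain complex is a boundary. -/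
/- STATEMENT 8: If a graph Γ has the star property (for every finite set of vertices
there is a vertex distinct from and adjacent to all of them), then the simplicial chain
complex of its flag complex Fl(Γ) is acyclic: every k-cycle (k ≥ 1) is a boundary. -/

namespace Stmt8

variable {V : Type*} (G : SimpleGraph V)

/-- The star property. -/
def HasStarProperty : Prop :=
  ∀ s : Finset V, ∃ y, y ∉ s ∧ ∀ x ∈ s, G.Adj y x

/-- A k-simplex of the flag complex: a (k+1)-tuple of pairwise equal-or-adjacent
vertices. -/
def FlagSimplex (k : ℕ) : Type _ :=
  {f : Fin (k + 1) → V // ∀ i j, f i = f j ∨ G.Adj (f i) (f j)}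

/-- The ν-th face of a simplex. -/
def face {k : ℕ} (ν : Fin (k + 2)) (s : FlagSimplex G (k + 1)) : FlagSimplex G k :=
  ⟨s.1 ∘ ν.succAbove, fun i j => s.2 _ _⟩

/-- The boundary of a single simplex: ∂(x₀,…,x_{k+1}) = Σ_ν (-1)^ν (x₀,…,x̂_ν,…,x_{k+1}). -/
noncomputable def bdrySimplex {k : ℕ} (s : FlagSimplex G (k + 1)) :
    FlagSimplex G k →₀ ℤ :=
  ∑ ν : Fin (k + 2), (-1 : ℤ) ^ (ν : ℕ) • Finsupp.single (face G ν s) 1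

/-- The boundary operator on simplicial chains. -/
noncomputable def bdry {k : ℕ} (c : FlagSimplex G (k + 1) →₀ ℤ) :
    FlagSimplex G k →₀ ℤ :=
  c.sum fun s m => m • bdrySimplex G s

/-! ### Auxiliary material for the proof -/

/-- `ok y s`: `y` is equal or adjacent to every vertex of `s`. -/
def ok (y : V) {k : ℕ} (s : FlagSimplex G k) : Prop :=
  ∀ i, y = s.1 i ∨ G.Adj y (s.1 i)

open Classical in
/-- The apex used for the cone over `s`: `y` if it works, otherwise a vertex of `s`. -/
noncomputable def apex (y : V) {k : ℕ} (s : FlagSimplex G k) : V :=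
  if ok G y s then y else s.1 0

lemma apex_eq {y : V} {k : ℕ} {s : FlagSimplex G k} (h : ok G y s) :
    apex G y s = y := if_pos h

/-- The cone over a simplex. -/
noncomputable def coneS (y : V) {k : ℕ} (s : FlagSimplex G k) : FlagSimplex G (k + 1) :=
  ⟨Fin.cons (apex G y s) s.1, by
    have key : ∀ j, apex G y s = (Fin.cons (apex G y s) s.1 : Fin (k + 2) → V) j ∨
        G.Adj (apex G y s) ((Fin.cons (apex G y s) s.1 : Fin (k + 2) → V) j) := by
      intro j
      induction j using Fin.cases with
      | zero => exact Or.inl rfl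
      | succ j =>
        simp only [Fin.cons_succ]
        unfold apex
        split_ifs with h
        · exact h j
        · exact s.2 0 j
    intro i j
    induction i using Fin.cases with
    | zero =>
      simpa only [Fin.cons_zero] using key j
    | succ i =>
      induction j using Fin.cases with
      | zero =>
        simp only [Fin.cons_zero, Fin.cons_succ]
        rcases key i.succ with h | h
        · exact Or.inl (by simpa only [Fin.cons_succ] using h.symm)
        · exact Or.inr (by simpa only [Fin.cons_succ] using h.symm)
      | succ j =>
        simpa only [Fin.cons_succ] using s.2 i j⟩

lemma ok_face {y : V} {k : ℕ} {s : FlagSimplex G (k + 1)} (h : ok G y s)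
    (ν : Fin (k + 2)) : ok G y (face G ν s) :=
  fun i => h (ν.succAbove i)

lemma face_zero_coneS (y : V) {k : ℕ} (s : FlagSimplex G (k + 1)) :
    face G 0 (coneS G y s) = s := by
  apply Subtype.ext
  funext i
  show (coneS G y s).1 ((0 : Fin (k + 3)).succAbove i) = s.1 i
  rw [Fin.succAbove_zero]
  simp [coneS, Fin.cons_succ]

lemma face_succ_coneS {y : V} {k : ℕ} {s : FlagSimplex G (k + 1)} (h : ok G y s)
    (ν : Fin (k + 2)) :
    face G ν.succ (coneS G y s) = coneS G y (face G ν s) := by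
  apply Subtype.ext
  funext i
  show (coneS G y s).1 (ν.succ.succAbove i) = (coneS G y (face G ν s)).1 i
  induction i using Fin.cases with
  | zero =>
    rw [Fin.succ_succAbove_zero]
    show apex G y s = apex G y (face G ν s)
    rw [apex_eq G h, apex_eq G (ok_face G h ν)]
  | succ i =>
    rw [Fin.succ_succAbove_succ]
    show (Fin.cons (apex G y s) s.1 : Fin (k + 3) → V) (ν.succAbove i).succ =
      (Fin.cons (apex G y (face G ν s)) (face G ν s).1 : Fin (k + 2) → V) i.succ
    rw [Fin.cons_succ, Fin.cons_succ]
    rfl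

/-- Key identity: `∂(cone s) = s - cone(∂ s)`. -/
lemma bdrySimplex_coneS {y : V} {k : ℕ} {s : FlagSimplex G (k + 1)} (h : ok G y s) :
    bdrySimplex G (coneS G y s) =
      Finsupp.single s 1 - Finsupp.mapDomain (coneS G y) (bdrySimplex G s) := by
  have hmap : Finsupp.mapDomain (coneS G y) (bdrySimplex G s) =
      ∑ ν : Fin (k + 2), (-1 : ℤ) ^ (ν : ℕ) •
        Finsupp.single (coneS G y (face G ν s)) 1 := by
    rw [bdrySimplex, show Finsupp.mapDomain (coneS G y) =
        ⇑(Finsupp.mapDomain.addMonoidHom (coneS G y)) from rfl, map_sum]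
    refine Finset.sum_congr rfl fun ν _ => ?_
    simp only [Finsupp.mapDomain.addMonoidHom_apply, Finsupp.mapDomain_smul,
      Finsupp.mapDomain_single]
  rw [hmap, bdrySimplex, Fin.sum_univ_succ]
  rw [face_zero_coneS]
  simp only [Fin.val_zero, pow_zero, one_smul, Fin.val_succ]
  rw [show (∑ ν : Fin (k + 2), (-1 : ℤ) ^ ((ν : ℕ) + 1) •
      Finsupp.single (face G ν.succ (coneS G y s)) (1 : ℤ)) =
      -∑ ν : Fin (k + 2), (-1 : ℤ) ^ (ν : ℕ) •
      Finsupp.single (coneS G y (face G ν s)) (1 : ℤ) by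
    rw [← Finset.sum_neg_distrib]
    refine Finset.sum_congr rfl fun ν _ => ?_
    rw [face_succ_coneS G h ν, pow_succ, mul_neg_one, neg_smul]]
  abel

lemma bdry_single {k : ℕ} (s : FlagSimplex G (k + 1)) (m : ℤ) :
    bdry G (Finsupp.single s m) = m • bdrySimplex G s := by
  rw [bdry]
  exact Finsupp.sum_single_index (zero_smul ℤ (bdrySimplex G s))

lemma bdry_add {k : ℕ} (c₁ c₂ : FlagSimplex G (k + 1) →₀ ℤ) :
    bdry G (c₁ + c₂) = bdry G c₁ + bdry G c₂ := by
  classical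
  exact Finsupp.sum_add_index (fun a _ => zero_smul ℤ _)
    (fun a _ b₁ b₂ => add_smul b₁ b₂ _)

/-- The homotopy identity for the cone: `∂(cone c) = c - cone(∂ c)` on chains
all of whose simplices are compatible with `y`. -/
lemma bdry_mapDomain_coneS {y : V} {k : ℕ} (c : FlagSimplex G (k + 1) →₀ ℤ)
    (hy : ∀ s, c s ≠ 0 → ok G y s) :
    bdry G (Finsupp.mapDomain (coneS G y) c) =
      c - Finsupp.mapDomain (coneS G y) (bdry G c) := by
  classical
  induction c using Finsupp.induction with
  | zero => simp [bdry, Finsupp.mapDomain_zero]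
  | single_add s m g hs hm ih =>
    have hys : ok G y s := hy s (by simp [Finsupp.notMem_support_iff.mp hs, hm])
    have hyg : ∀ t, g t ≠ 0 → ok G y t := by
      intro t ht
      refine hy t ?_
      by_cases hts : t = s
      · subst hts; exact absurd (Finsupp.notMem_support_iff.mp hs) ht
      · have hst : (Finsupp.single s m + g) t = g t := by
          simp [Finsupp.add_apply, Finsupp.single_eq_of_ne' fun h => hts h.symm]
        rw [hst]; exact ht
    rw [Finsupp.mapDomain_add, bdry_add, Finsupp.mapDomain_single, bdry_single,
      bdrySimplex_coneS G hys, ih hyg, bdry_add, bdry_single, Finsupp.mapDomain_add,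
      Finsupp.mapDomain_smul, smul_sub, Finsupp.smul_single, smul_eq_mul, mul_one]
    abel

theorem flag_complex_acyclic (hstar : HasStarProperty G) (k : ℕ)
    (c : FlagSimplex G (k + 1) →₀ ℤ) (hc : bdry G c = 0) :
    ∃ d : FlagSimplex G (k + 2) →₀ ℤ, bdry G d = c := by
  classical
  obtain ⟨y, -, hy⟩ := hstar (c.support.biUnion fun s => Finset.image s.1 Finset.univ)
  refine ⟨Finsupp.mapDomain (coneS G y) c, ?_⟩
  have hok : ∀ s, c s ≠ 0 → ok G y s := by
    intro s hs i
    refine Or.inr (hy _ ?_)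
    exact Finset.mem_biUnion.mpr ⟨s, Finsupp.mem_support_iff.mpr hs,
      Finset.mem_image.mpr ⟨i, Finset.mem_univ i, rfl⟩⟩
  rw [bdry_mapDomain_coneS G c hok, hc, Finsupp.mapDomain_zero, sub_zero]

end Stmt8
end

section
/- Let X, Y be opposite Lagrangians in a 2n-dimensional symplectic space M over a field K of characteristic ≠ 2, with dual bases x, y, and Z = u_t(Y) with t symmetric invertible, so that X, Y, Z are pairwise opposite. Then the Kashiwara form q(x,y,z) = ω(x,y) + ω(y,z) + ω(z,x) on X ⊕ Y ⊕ Z is nondegenerate and its Witt class equals [t] ∈ W(K): X ⊕ Y ⊕ 0 is a hyperbolic (hence metabolic) subspace, and its orthogonal complement {(tz, z, z) : z ∈ Kⁿ} carries the form z ↦ zᵀ t z. -/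
/- STATEMENT 18: X, Y opposite Lagrangians in the standard 2n-dimensional symplectic
space over K (char ≠ 2) with dual bases, Z = u_t(Y) with t symmetric invertible, so
X, Y, Z pairwise opposite.  In coordinates (a,b,c) on X ⊕ Y ⊕ Z, the Kashiwara form
q(a,b,c) = ω(x_a,y_b) + ω(y_b,z_c) + ω(z_c,x_a) = -a·b + b·(tc) + c·a (polarized to the
symmetric bilinear form B) is nondegenerate and its Witt class equals [t]:
X ⊕ Y ⊕ 0 is a metabolic (hyperbolic) subspace, its orthogonal complement is
{(tz,z,z) : z ∈ Kⁿ}, on which the form is z ↦ zᵀtz. -/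

namespace Stmt18
open Matrix

variable {K : Type*} [Field K]

/-- The totally isotropic condition for a subspace W with respect to the symmetric
bilinear form with Gram matrix A. -/
def IsTotIso {ι : Type} [Fintype ι] (A : Matrix ι ι K) (W : Submodule K (ι → K)) : Prop :=
  ∀ x ∈ W, ∀ y ∈ W, x ⬝ᵥ A.mulVec y = 0

/-- A nondegenerate form is metabolic if it has a totally isotropic subspace of half
its dimension (so it vanishes in the Witt group). -/
def IsMetabolic {ι : Type} [Fintype ι] [DecidableEq ι] (A : Matrix ι ι K) : Prop :=
  IsUnit A ∧ ∃ W : Submodule K (ι → K), IsTotIso A W ∧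
    2 * Module.finrank K W = Fintype.card ι

/-- Congruence (isometry) of the forms with Gram matrices A and B: B = Pᵀ A P for an
invertible change of basis P. -/
def Congruent {ι κ : Type} [Fintype ι] [DecidableEq ι] [Fintype κ] [DecidableEq κ] (A : Matrix ι ι K) (B : Matrix κ κ K) : Prop :=
  ∃ (P : Matrix ι κ K) (Q : Matrix κ ι K), P * Q = 1 ∧ Q * P = 1 ∧ B = Pᵀ * A * P

/-- Orthogonal direct sum of two forms. -/
def dsum {ι κ : Type} (A : Matrix ι ι K) (B : Matrix κ κ K) : Matrix (ι ⊕ κ) (ι ⊕ κ) K :=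
  Matrix.fromBlocks A 0 0 B

/-- Witt equivalence: equality of the classes of A and B in the Witt group W(K),
i.e. A and B become isometric after adding metabolic forms. -/
def WittEquiv {ι κ : Type} [Fintype ι] [DecidableEq ι] [Fintype κ] [DecidableEq κ]
    (A : Matrix ι ι K) (B : Matrix κ κ K) : Prop :=
  ∃ (m l : ℕ) (M : Matrix (Fin m) (Fin m) K) (N : Matrix (Fin l) (Fin l) K),
    IsMetabolic M ∧ IsMetabolic N ∧ Congruent (dsum A M) (dsum B N)

variable {n : ℕ}

/-- Coordinates (a,b,c) on X ⊕ Y ⊕ Z. -/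
abbrev V3 (K : Type*) (n : ℕ) := (Fin n → K) × (Fin n → K) × (Fin n → K)

/-- The Kashiwara quadratic form q(a,b,c) = ω(x_a,y_b)+ω(y_b,z_c)+ω(z_c,x_a). -/
def qK (t : Matrix (Fin n) (Fin n) K) (v : V3 K n) : K :=
  -(v.1 ⬝ᵥ v.2.1) + v.2.1 ⬝ᵥ t.mulVec v.2.2 + v.2.2 ⬝ᵥ v.1

/-- Its polarization: the associated symmetric bilinear form (char ≠ 2). -/
def BK (t : Matrix (Fin n) (Fin n) K) (v w : V3 K n) : K :=
  (qK t (v + w) - qK t v - qK t w) / 2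

/-- The standard basis of X ⊕ Y ⊕ Z. -/
def bas (i : (Fin n ⊕ Fin n) ⊕ Fin n) : V3 K n :=
  match i with
  | Sum.inl (Sum.inl i) => (Pi.single i 1, 0, 0)
  | Sum.inl (Sum.inr i) => (0, Pi.single i 1, 0)
  | Sum.inr i => (0, 0, Pi.single i 1)

/-- The Gram matrix of the Kashiwara form. -/
def gramK (t : Matrix (Fin n) (Fin n) K) :
    Matrix ((Fin n ⊕ Fin n) ⊕ Fin n) ((Fin n ⊕ Fin n) ⊕ Fin n) K :=
  Matrix.of fun i j => BK t (bas i) (bas j)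

/-! ### Auxiliary machinery -/

section Aux

variable {K : Type*} [Field K] {n : ℕ}

/-- Congruence is symmetric. -/
lemma Congruent.symm' {ι κ : Type} [Fintype ι] [DecidableEq ι] [Fintype κ] [DecidableEq κ]
    {A : Matrix ι ι K} {B : Matrix κ κ K} (h : Congruent A B) : Congruent B A := by
  obtain ⟨P, Q, h1, h2, h3⟩ := h
  refine ⟨Q, P, h2, h1, ?_⟩
  have hQP : Qᵀ * Pᵀ = 1 := by rw [← Matrix.transpose_mul, h1, Matrix.transpose_one]
  rw [h3]
  calc A = (Qᵀ * Pᵀ) * A * (P * Q) := by rw [hQP, h1, Matrix.one_mul, Matrix.mul_one]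
    _ = Qᵀ * (Pᵀ * A * P) * Q := by simp only [Matrix.mul_assoc]

/-- Congruence is transitive. -/
lemma Congruent.trans' {ι κ ν : Type} [Fintype ι] [DecidableEq ι] [Fintype κ] [DecidableEq κ]
    [Fintype ν] [DecidableEq ν]
    {A : Matrix ι ι K} {B : Matrix κ κ K} {C : Matrix ν ν K}
    (hab : Congruent A B) (hbc : Congruent B C) : Congruent A C := by
  obtain ⟨P, Q, h1, h2, h3⟩ := hab
  obtain ⟨P', Q', h1', h2', h3'⟩ := hbc
  refine ⟨P * P', Q' * Q, ?_, ?_, ?_⟩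
  · calc P * P' * (Q' * Q) = P * (P' * Q') * Q := by simp only [Matrix.mul_assoc]
      _ = 1 := by rw [h1', Matrix.mul_one, h1]
  · calc Q' * Q * (P * P') = Q' * (Q * P) * P' := by simp only [Matrix.mul_assoc]
      _ = 1 := by rw [h2, Matrix.mul_one, h2']
  · rw [h3', h3, Matrix.transpose_mul]
    simp only [Matrix.mul_assoc]

/-- A matrix is congruent to any reindexing of itself. -/
lemma congruent_submatrix {ι κ : Type} [Fintype ι] [DecidableEq ι] [Fintype κ] [DecidableEq κ]
    (A : Matrix ι ι K) (e : κ ≃ ι) : Congruent A (A.submatrix e e) := by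
  refine ⟨(1 : Matrix ι ι K).submatrix id e, (1 : Matrix ι ι K).submatrix e id, ?_, ?_, ?_⟩
  · have := Matrix.submatrix_mul_equiv (1 : Matrix ι ι K) (1 : Matrix ι ι K) id e id
    rw [this, Matrix.one_mul, Matrix.submatrix_id_id]
  · have := Matrix.submatrix_mul_equiv (1 : Matrix ι ι K) (1 : Matrix ι ι K) e (Equiv.refl ι) e
    simpa using this
  · ext k k'
    simp [Matrix.mul_apply, Matrix.one_apply, ite_mul, mul_ite, zero_mul, mul_zero,
      Finset.sum_ite_eq, Finset.sum_ite_eq']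

/-- Metabolicity transfers along congruence. -/
lemma IsMetabolic.of_congruent {ι κ : Type} [Fintype ι] [DecidableEq ι] [Fintype κ]
    [DecidableEq κ] {A : Matrix ι ι K} {B : Matrix κ κ K} (hAB : Congruent A B)
    (hA : IsMetabolic A) : IsMetabolic B := by
  obtain ⟨P, Q, h1, h2, h3⟩ := hAB
  obtain ⟨hu, W, hW, hrank⟩ := hA
  have hdet : IsUnit A.det := (Matrix.isUnit_iff_isUnit_det A).mp hu
  have hAinv : A * A⁻¹ = 1 := Matrix.mul_nonsing_inv A hdet
  have hAinv' : A⁻¹ * A = 1 := Matrix.nonsing_inv_mul A hdet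
  have hQP : Qᵀ * Pᵀ = 1 := by rw [← Matrix.transpose_mul, h1, Matrix.transpose_one]
  have hPQ : Pᵀ * Qᵀ = 1 := by rw [← Matrix.transpose_mul, h2, Matrix.transpose_one]
  have key : ∀ v : ι → K, P *ᵥ (Q *ᵥ v) = v := fun v => by
    rw [Matrix.mulVec_mulVec, h1, Matrix.one_mulVec]
  constructor
  · refine ⟨⟨B, Q * A⁻¹ * Qᵀ, ?_, ?_⟩, rfl⟩
    · rw [h3]
      calc Pᵀ * A * P * (Q * A⁻¹ * Qᵀ) = Pᵀ * (A * ((P * Q) * (A⁻¹ * Qᵀ))) := by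
            simp only [Matrix.mul_assoc]
        _ = 1 := by rw [h1, Matrix.one_mul, ← Matrix.mul_assoc A A⁻¹ Qᵀ, hAinv,
              Matrix.one_mul, hPQ]
    · rw [h3]
      calc Q * A⁻¹ * Qᵀ * (Pᵀ * A * P) = Q * (A⁻¹ * ((Qᵀ * Pᵀ) * (A * P))) := by
            simp only [Matrix.mul_assoc]
        _ = 1 := by rw [hQP, Matrix.one_mul, ← Matrix.mul_assoc A⁻¹ A P, hAinv',
              Matrix.one_mul, h2]
  · let e : (ι → K) ≃ₗ[K] (κ → K) :=
      LinearEquiv.ofLinear Q.mulVecLin P.mulVecLin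
        (by rw [← Matrix.mulVecLin_mul, h2, Matrix.mulVecLin_one])
        (by rw [← Matrix.mulVecLin_mul, h1, Matrix.mulVecLin_one])
    refine ⟨W.map Q.mulVecLin, ?_, ?_⟩
    · rintro x ⟨x₀, hx₀, rfl⟩ y ⟨y₀, hy₀, rfl⟩
      simp only [Matrix.mulVecLin_apply]
      rw [h3, Matrix.mul_assoc, ← Matrix.mulVec_mulVec, dotProduct_mulVec,
        Matrix.vecMul_transpose, key, ← Matrix.mulVec_mulVec, key]
      exact hW x₀ hx₀ y₀ hy₀
    · have hfr : Module.finrank K ↥(W.map Q.mulVecLin) = Module.finrank K W := by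
        have he : Q.mulVecLin = (e : (ι → K) →ₗ[K] (κ → K)) := rfl
        rw [he]
        exact LinearEquiv.finrank_map_eq e W
      have hcard : Fintype.card ι = Fintype.card κ := by
        have h1' := e.finrank_eq
        rwa [Module.finrank_pi, Module.finrank_pi] at h1'
      rw [hfr, ← hcard]
      exact hrank

end Aux
/-- The hyperbolic Gram matrix on X ⊕ Y. -/
def Hb (K : Type*) [Field K] (n : ℕ) : Matrix (Fin n ⊕ Fin n) (Fin n ⊕ Fin n) K :=
  Matrix.fromBlocks 0 ((-(2⁻¹ : K)) • 1) ((-(2⁻¹ : K)) • 1) 0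

/-- The off-diagonal block of the Kashiwara Gram matrix. -/
def G12b (t : Matrix (Fin n) (Fin n) K) : Matrix (Fin n ⊕ Fin n) (Fin n) K :=
  Matrix.fromRows ((2⁻¹ : K) • (1 : Matrix (Fin n) (Fin n) K)) ((2⁻¹ : K) • t)

lemma Hb_transpose : (Hb K n)ᵀ = Hb K n := by
  rw [Hb, Matrix.fromBlocks_transpose]
  simp

lemma BK_eq (t : Matrix (Fin n) (Fin n) K) (v w : V3 K n) :
    BK t v w = (-(v.1 ⬝ᵥ w.2.1) - w.1 ⬝ᵥ v.2.1 + v.2.1 ⬝ᵥ t *ᵥ w.2.2 + w.2.1 ⬝ᵥ t *ᵥ v.2.2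
      + v.2.2 ⬝ᵥ w.1 + w.2.2 ⬝ᵥ v.1) / 2 := by
  simp only [BK, qK, Prod.fst_add, Prod.snd_add, add_dotProduct, dotProduct_add,
    Matrix.mulVec_add]
  ring

lemma gram_eq (t : Matrix (Fin n) (Fin n) K) :
    gramK t = Matrix.fromBlocks (Hb K n) (G12b t) (G12b t)ᵀ 0 := by
  ext i j
  obtain (i | i) | i := i <;> obtain (j | j) | j := j <;>
    simp [gramK, bas, BK_eq, Hb, G12b, Matrix.one_apply, Pi.single_apply,
      single_dotProduct, dotProduct_single, Matrix.mulVec_single,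
      div_eq_inv_mul] <;>
    · split_ifs <;> first | rfl | ring1 | (subst_vars; simp_all)

lemma HR_eq (t : Matrix (Fin n) (Fin n) K) :
    Hb K n * Matrix.fromRows t (1 : Matrix (Fin n) (Fin n) K) = -(G12b t) := by
  rw [Hb, Matrix.fromBlocks_mul_fromRows, G12b]
  simp [Matrix.smul_mul]

lemma GR_eq (hchar : (2 : K) ≠ 0) (t : Matrix (Fin n) (Fin n) K) (ht : t.IsSymm) :
    (G12b t)ᵀ * Matrix.fromRows t (1 : Matrix (Fin n) (Fin n) K) = t := by
  rw [G12b, Matrix.transpose_fromRows, Matrix.fromCols_mul_fromRows]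
  rw [Matrix.transpose_smul, Matrix.transpose_smul, Matrix.transpose_one, ht.eq]
  rw [Matrix.smul_mul, Matrix.smul_mul, Matrix.one_mul, Matrix.mul_one, ← add_smul]
  have : (2⁻¹ : K) + 2⁻¹ = 1 := by
    rw [← two_mul, mul_inv_cancel₀ hchar]
  rw [this, one_smul]

/-- The main congruence: the Kashiwara form is the orthogonal sum of the hyperbolic form
on X ⊕ Y and the form t on the complement {(tz, z, z)}. -/
lemma congr_main (hchar : (2 : K) ≠ 0) (t : Matrix (Fin n) (Fin n) K) (ht : t.IsSymm) :
    Congruent (gramK t) (Matrix.fromBlocks (Hb K n) 0 0 t) := by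
  set R := Matrix.fromRows t (1 : Matrix (Fin n) (Fin n) K) with hR
  refine ⟨Matrix.fromBlocks 1 R 0 1, Matrix.fromBlocks 1 (-R) 0 1, ?_, ?_, ?_⟩
  · rw [Matrix.fromBlocks_multiply]
    simp [Matrix.fromBlocks_one]
  · rw [Matrix.fromBlocks_multiply]
    simp [Matrix.fromBlocks_one]
  · have e1 : Matrix.fromBlocks (Hb K n) (G12b t) (G12b t)ᵀ 0 * Matrix.fromBlocks 1 R 0 1
        = Matrix.fromBlocks (Hb K n) 0 (G12b t)ᵀ t := by
      rw [Matrix.fromBlocks_multiply]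
      rw [hR, HR_eq, GR_eq hchar t ht]
      simp
    have htr : Rᵀ * Hb K n = -(G12b t)ᵀ := by
      calc Rᵀ * Hb K n = Rᵀ * (Hb K n)ᵀ := by rw [Hb_transpose]
        _ = (Hb K n * R)ᵀ := by rw [← Matrix.transpose_mul]
        _ = -(G12b t)ᵀ := by rw [hR, HR_eq, Matrix.transpose_neg]
    have e2 : Matrix.fromBlocks 1 0 Rᵀ 1 * Matrix.fromBlocks (Hb K n) 0 (G12b t)ᵀ t
        = Matrix.fromBlocks (Hb K n) 0 0 t := by
      rw [Matrix.fromBlocks_multiply, htr]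
      simp
    rw [gram_eq, Matrix.fromBlocks_transpose]
    simp only [Matrix.transpose_one, Matrix.transpose_zero]
    rw [Matrix.mul_assoc, e1, e2]

/-- The hyperbolic form is metabolic. -/
lemma Hb_metabolic (hchar : (2 : K) ≠ 0) : IsMetabolic (Hb K n) := by
  have h2 : (-(2⁻¹ : K)) * (-(2 : K)) = 1 := by
    rw [neg_mul_neg, inv_mul_cancel₀ hchar]
  constructor
  · refine ⟨⟨Hb K n, Matrix.fromBlocks 0 ((-(2 : K)) • 1) ((-(2 : K)) • 1) 0, ?_, ?_⟩, rfl⟩ <;>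
    · rw [Hb, Matrix.fromBlocks_multiply]
      simp [Matrix.smul_mul, Matrix.mul_smul, smul_smul, h2, mul_inv_cancel₀ hchar,
        inv_mul_cancel₀ hchar, Matrix.fromBlocks_one]
  · refine ⟨LinearMap.ker (LinearMap.funLeft K K (Sum.inr : Fin n → Fin n ⊕ Fin n)), ?_, ?_⟩
    · intro x hx y hy
      have hx' : ∀ j, x (Sum.inr j) = 0 := fun j => congrFun (LinearMap.mem_ker.mp hx) j
      have hy' : ∀ j, y (Sum.inr j) = 0 := fun j => congrFun (LinearMap.mem_ker.mp hy) j
      simp [dotProduct, Matrix.mulVec, Fintype.sum_sum_type, Hb, hx', hy']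
    · have hsur : Function.Surjective (LinearMap.funLeft K K (Sum.inr : Fin n → Fin n ⊕ Fin n)) :=
        LinearMap.funLeft_surjective_of_injective K K _ Sum.inr_injective
      have h := LinearMap.finrank_range_add_finrank_ker
        (LinearMap.funLeft K K (Sum.inr : Fin n → Fin n ⊕ Fin n))
      rw [LinearMap.range_eq_top.mpr hsur, finrank_top, Module.finrank_pi, Module.finrank_pi] at h
      simp only [Fintype.card_sum, Fintype.card_fin] at h ⊢
      omega
/-- Identification of the reindexed block sum. -/
lemma c3_eq (t : Matrix (Fin n) (Fin n) K) :
    dsum t ((Hb K n).submatrix finSumFinEquiv.symm finSumFinEquiv.symm)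
      = (Matrix.fromBlocks (Hb K n) 0 0 t).submatrix
        (((Equiv.sumCongr (Equiv.refl (Fin n)) (finSumFinEquiv.symm : Fin (n + n) ≃ _)).trans
          (Equiv.sumComm (Fin n) (Fin n ⊕ Fin n))))
        (((Equiv.sumCongr (Equiv.refl (Fin n)) (finSumFinEquiv.symm : Fin (n + n) ≃ _)).trans
          (Equiv.sumComm (Fin n) (Fin n ⊕ Fin n)))) := by
  ext i j
  obtain (i | i) := i <;> obtain (j | j) := j <;>
    simp [dsum, Equiv.sumComm_apply]

theorem kashiwara_maslov_index (hchar : (2 : K) ≠ 0)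
    (t : Matrix (Fin n) (Fin n) K) (ht : t.IsSymm) (htu : IsUnit t) :
    -- q is nondegenerate
    (∀ v : V3 K n, (∀ w : V3 K n, BK t v w = 0) → v = 0) ∧
    -- its Witt class is [t]
    WittEquiv (gramK t) t ∧
    -- X ⊕ Y ⊕ 0 is a metabolic subspace
    IsMetabolic (Matrix.of fun i j : Fin n ⊕ Fin n => BK t (bas (Sum.inl i)) (bas (Sum.inl j))) ∧
    -- the orthogonal complement of X ⊕ Y ⊕ 0 is {(tz,z,z)}
    {v : V3 K n | ∀ a b : Fin n → K, BK t (a, b, 0) v = 0} =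
      {v : V3 K n | ∃ z : Fin n → K, v = (t.mulVec z, z, z)} ∧
    -- on which the form is z ↦ zᵀ t z
    (∀ z z' : Fin n → K,
      BK t (t.mulVec z, z, z) (t.mulVec z', z', z') = z ⬝ᵥ t.mulVec z') := by
  have hsymmAux : ∀ z z' : Fin n → K, z' ⬝ᵥ t *ᵥ z = z ⬝ᵥ t *ᵥ z' := by
    intro z z'
    rw [dotProduct_mulVec, ← Matrix.mulVec_transpose, ht.eq, dotProduct_comm]
  have hdet : IsUnit t.det := (Matrix.isUnit_iff_isUnit_det t).mp htu
  have htinj : ∀ z : Fin n → K, t *ᵥ z = 0 → z = 0 := by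
    intro z hz
    have h := congrArg (fun w => t⁻¹ *ᵥ w) hz
    simpa [Matrix.mulVec_mulVec, Matrix.nonsing_inv_mul t hdet] using h
  refine ⟨?_, ?_, ?_, ?_, ?_⟩
  · -- nondegeneracy
    rintro ⟨a, b, c⟩ hv
    have h1 : c = b := by
      funext i
      have h := hv (Pi.single i 1, 0, 0)
      rw [BK_eq] at h
      simp only [dotProduct_zero, zero_dotProduct, Matrix.mulVec_zero,
        single_dotProduct, dotProduct_single, one_mul, mul_one, neg_zero,
        add_zero, zero_add, sub_zero, zero_sub] at h
      rcases div_eq_zero_iff.mp h with h' | h'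
      · linear_combination h'
      · exact absurd h' hchar
    have h2 : t *ᵥ c = a := by
      funext i
      have h := hv (0, Pi.single i 1, 0)
      rw [BK_eq] at h
      simp only [dotProduct_zero, zero_dotProduct, Matrix.mulVec_zero,
        single_dotProduct, dotProduct_single, one_mul, mul_one, neg_zero,
        add_zero, zero_add, sub_zero, zero_sub] at h
      rcases div_eq_zero_iff.mp h with h' | h'
      · linear_combination h'
      · exact absurd h' hchar
    have h3 : t *ᵥ b = -a := by
      funext i
      have h := hv (0, 0, Pi.single i 1)
      rw [BK_eq] at h
      rw [hsymmAux (Pi.single i 1) b] at h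
      simp only [dotProduct_zero, zero_dotProduct, Matrix.mulVec_zero,
        single_dotProduct, dotProduct_single, one_mul, mul_one, neg_zero,
        add_zero, zero_add, sub_zero, zero_sub] at h
      rcases div_eq_zero_iff.mp h with h' | h'
      · simp only [Pi.neg_apply]
        linear_combination h'
      · exact absurd h' hchar
    have ha : a = 0 := by
      have hba : t *ᵥ b = a := by rw [← h1, h2]
      have : a = -a := by rw [← h3, hba]
      funext i
      have h2a : 2 * a i = 0 := by
        have := congrFun this i
        simp only [Pi.neg_apply] at this
        linear_combination this
      exact (mul_eq_zero.mp h2a).resolve_left hchar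
    have hb : b = 0 := by
      apply htinj
      rw [h3, ha, neg_zero]
    have hc : c = 0 := by rw [h1, hb]
    simp [ha, hb, hc, Prod.ext_iff]
  · -- Witt class is [t]
    refine ⟨0, n + n, 1,
      (Hb K n).submatrix finSumFinEquiv.symm finSumFinEquiv.symm, ?_, ?_, ?_⟩
    · refine ⟨isUnit_one, ⊥, ?_, by simp⟩
      intro x hx y hy
      have hx0 : x = 0 := by simpa using hx
      simp [hx0]
    · exact (Hb_metabolic hchar).of_congruent (congruent_submatrix _ _)
    · have c0 : dsum (gramK t) (1 : Matrix (Fin 0) (Fin 0) K)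
          = (gramK t).submatrix (Equiv.sumEmpty _ (Fin 0)) (Equiv.sumEmpty _ (Fin 0)) := by
        ext i j
        obtain (i | i) := i
        · obtain (j | j) := j
          · simp [dsum]
          · exact j.elim0
        · exact i.elim0
      have g1 : Congruent (dsum (gramK t) (1 : Matrix (Fin 0) (Fin 0) K)) (gramK t) := by
        refine Congruent.symm' ?_
        rw [c0]
        exact congruent_submatrix _ _
      have g3 : Congruent (Matrix.fromBlocks (Hb K n) 0 0 t)
          (dsum t ((Hb K n).submatrix finSumFinEquiv.symm finSumFinEquiv.symm)) := by
        rw [c3_eq t]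
        exact congruent_submatrix _ _
      exact g1.trans' ((congr_main hchar t ht).trans' g3)
  · -- X ⊕ Y ⊕ 0 is metabolic
    have hxy : (Matrix.of fun i j : Fin n ⊕ Fin n =>
        BK t (bas (Sum.inl i)) (bas (Sum.inl j))) = Hb K n := by
      ext i j
      have h := Matrix.ext_iff.mpr (gram_eq t) (Sum.inl i) (Sum.inl j)
      simpa [gramK] using h
    rw [hxy]
    exact Hb_metabolic hchar
  · -- orthogonal complement
    ext ⟨a, b, c⟩
    simp only [Set.mem_setOf_eq]
    constructor
    · intro h
      refine ⟨c, ?_⟩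
      have h1 : b = c := by
        funext i
        have hh := h (Pi.single i 1) 0
        rw [BK_eq] at hh
        simp only [dotProduct_zero, zero_dotProduct, Matrix.mulVec_zero,
          single_dotProduct, dotProduct_single, one_mul, mul_one, neg_zero,
          add_zero, zero_add, sub_zero, zero_sub] at hh
        rcases div_eq_zero_iff.mp hh with h' | h'
        · linear_combination -h'
        · exact absurd h' hchar
      have h2 : a = t *ᵥ c := by
        funext i
        have hh := h 0 (Pi.single i 1)
        rw [BK_eq] at hh
        simp only [dotProduct_zero, zero_dotProduct, Matrix.mulVec_zero,
          single_dotProduct, dotProduct_single, one_mul, mul_one, neg_zero,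
          add_zero, zero_add, sub_zero, zero_sub] at hh
        rcases div_eq_zero_iff.mp hh with h' | h'
        · linear_combination -h'
        · exact absurd h' hchar
      rw [h1, h2]
    · rintro ⟨z, hz⟩ a' b'
      rw [hz, BK_eq]
      dsimp only
      rw [dotProduct_comm (t *ᵥ z) b', dotProduct_comm z a']
      simp only [dotProduct_zero, zero_dotProduct, Matrix.mulVec_zero]
      ring
  · -- the form on the complement
    intro z z'
    rw [BK_eq]
    dsimp only
    rw [div_eq_iff hchar]
    rw [dotProduct_comm (t *ᵥ z) z', dotProduct_comm (t *ᵥ z') z,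
      hsymmAux z z']
    ring

end Stmt18
end
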